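/- Multilinear interpolation on the unit cube preserves monotonicity: let L: [0,1]^k → ℝ be the multilinear interpolant of values v: {0,1}^k → ℝ on the vertices of the cube, L(x) = Σ_{s ∈ {0,1}^k} v(s) ∏_i (x_i if s_i = 1 else 1 − x_i). If v is monotone increasing on vertices (s ≤ s' entrywise implies v(s) ≤ v(s')), then L is monotone increasing on [0,1]^k (x ≤ x' entrywise implies L(x) ≤ L(x')). -/

import Mathlib

/-- The multilinear interpolant of vertex values `v : {0,1}^k → ℝ`. -/
noncomputable def multilinearInterp {k : ℕ} (v : (Fin k → Bool) → ℝ)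
    (x : Fin k → ℝ) : ℝ :=
  ∑ s : Fin k → Bool, v s * ∏ i, (if s i then x i else 1 - x i)

lemma multilinearInterp_weight_nonneg {k : ℕ} (s : Fin k → Bool) (x : Fin k → ℝ)
    (hx : ∀ i, x i ∈ Set.Icc (0 : ℝ) 1) :
    0 ≤ ∏ i, (if s i then x i else 1 - x i) := by
  apply Finset.prod_nonneg
  intro i _
  rcases hx i with ⟨h0, h1⟩
  split <;> linarith

lemma multilinearInterp_mono_v {k : ℕ} (v w : (Fin k → Bool) → ℝ)
    (hvw : ∀ s, v s ≤ w s) (x : Fin k → ℝ) (hx : ∀ i, x i ∈ Set.Icc (0 : ℝ) 1) :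
    multilinearInterp v x ≤ multilinearInterp w x := by
  apply Finset.sum_le_sum
  intro s _
  exact mul_le_mul_of_nonneg_right (hvw s) (multilinearInterp_weight_nonneg s x hx)

lemma multilinearInterp_split {k : ℕ} (v : (Fin (k + 1) → Bool) → ℝ) (x : Fin (k + 1) → ℝ) :
    multilinearInterp v x =
      (1 - x 0) * multilinearInterp (fun t => v (Fin.cons false t)) (x ∘ Fin.succ) +
      x 0 * multilinearInterp (fun t => v (Fin.cons true t)) (x ∘ Fin.succ) := by
  unfold multilinearInterp
  rw [← ((Fin.consEquiv (fun _ : Fin (k + 1) => Bool)).sum_comp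
    (fun s => v s * ∏ i, (if s i then x i else 1 - x i)))]
  rw [Fintype.sum_prod_type, Fintype.sum_bool]
  simp only [Fin.consEquiv_apply, Fin.prod_univ_succ, Fin.cons_zero, Fin.cons_succ,
    Function.comp, if_true, if_false]
  rw [Finset.mul_sum, Finset.mul_sum]
  rw [add_comm]
  congr 1
  all_goals
    apply Finset.sum_congr rfl
    intro t _
    simp [Fin.consEquiv]
    ring

theorem stmt19 {k : ℕ} (v : (Fin k → Bool) → ℝ)
    (hv : ∀ s s' : Fin k → Bool, (∀ i, s i ≤ s' i) → v s ≤ v s') :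
    ∀ x x' : Fin k → ℝ,
      (∀ i, x i ∈ Set.Icc (0 : ℝ) 1) → (∀ i, x' i ∈ Set.Icc (0 : ℝ) 1) →
      (∀ i, x i ≤ x' i) →
      multilinearInterp v x ≤ multilinearInterp v x' := by
  induction k with
  | zero =>
    intro x x' _ _ _
    have : x = x' := funext fun i => i.elim0
    rw [this]
  | succ k ih =>
    intro x x' hx hx' hle
    rw [multilinearInterp_split, multilinearInterp_split]
    set v0 := fun t => v (Fin.cons false t) with hv0
    set v1 := fun t => v (Fin.cons true t) with hv1
    have hmono0 : ∀ s s' : Fin k → Bool, (∀ i, s i ≤ s' i) → v0 s ≤ v0 s' := by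
      intro s s' h
      apply hv
      intro i
      refine Fin.cases ?_ ?_ i
      · simp
      · intro j; simpa using h j
    have hmono1 : ∀ s s' : Fin k → Bool, (∀ i, s i ≤ s' i) → v1 s ≤ v1 s' := by
      intro s s' h
      apply hv
      intro i
      refine Fin.cases ?_ ?_ i
      · simp
      · intro j; simpa using h j
    have hv01 : ∀ s, v0 s ≤ v1 s := by
      intro s
      apply hv
      intro i
      refine Fin.cases ?_ ?_ i
      · simp
      · intro j; simp
    have hxt : ∀ i, (x ∘ Fin.succ) i ∈ Set.Icc (0 : ℝ) 1 := fun i => hx _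
    have hx't : ∀ i, (x' ∘ Fin.succ) i ∈ Set.Icc (0 : ℝ) 1 := fun i => hx' _
    have hlet : ∀ i, (x ∘ Fin.succ) i ≤ (x' ∘ Fin.succ) i := fun i => hle _
    have hA0 : multilinearInterp v0 (x ∘ Fin.succ) ≤ multilinearInterp v0 (x' ∘ Fin.succ) :=
      ih v0 hmono0 _ _ hxt hx't hlet
    have hA1 : multilinearInterp v1 (x ∘ Fin.succ) ≤ multilinearInterp v1 (x' ∘ Fin.succ) :=
      ih v1 hmono1 _ _ hxt hx't hlet
    have hB : multilinearInterp v0 (x' ∘ Fin.succ) ≤ multilinearInterp v1 (x' ∘ Fin.succ) :=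
      multilinearInterp_mono_v v0 v1 hv01 _ hx't
    have h0 := hx 0
    have h0' := hx' 0
    rcases h0 with ⟨ha0, ha1⟩
    rcases h0' with ⟨hb0, hb1⟩
    have hab := hle 0
    nlinarith [hA0, hA1, hB, mul_nonneg ha0 (sub_nonneg.mpr hA1),
      mul_nonneg (sub_nonneg.mpr hab) (sub_nonneg.mpr hB)]
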